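/- Let Ω ⊆ 𝕆 be a circularly connected domain (𝕊(Ω,a,b) connected for all a ∈ ℝ, b > 0) and f : Ω → 𝕆 a slice function. Then f is a complete slice function: for any two imaginary units I₁, I₂ ∈ 𝕊, the I₁-slice stem function and the I₂-slice stem function of f coincide on Ω^{I₁} ∩ Ω^{I₂}. -/

import Mathlib

noncomputable section

/-- The octonions, realized as the Cayley–Dickson double of the quaternions. -/
@[ext] structure Octonion : Type where
  a : Quaternion ℝ
  b : Quaternion ℝ

notation "𝕆" => Octonion

namespace Octonion

instance : Zero 𝕆 := ⟨⟨0, 0⟩⟩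
instance : One 𝕆 := ⟨⟨1, 0⟩⟩
instance : Add 𝕆 := ⟨fun x y => ⟨x.a + y.a, x.b + y.b⟩⟩
instance : Neg 𝕆 := ⟨fun x => ⟨-x.a, -x.b⟩⟩
instance : Sub 𝕆 := ⟨fun x y => ⟨x.a - y.a, x.b - y.b⟩⟩
/-- Cayley–Dickson multiplication. -/
instance : Mul 𝕆 := ⟨fun x y => ⟨x.a * y.a - star y.b * x.b, y.b * x.a + x.b * star y.a⟩⟩
instance : SMul ℝ 𝕆 := ⟨fun r x => ⟨r • x.a, r • x.b⟩⟩
instance : SMul ℕ 𝕆 := ⟨fun n x => ⟨n • x.a, n • x.b⟩⟩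
instance : SMul ℤ 𝕆 := ⟨fun n x => ⟨n • x.a, n • x.b⟩⟩

def toProd (x : 𝕆) : Quaternion ℝ × Quaternion ℝ := (x.a, x.b)

lemma toProd_injective : Function.Injective toProd := by
  intro x y h
  cases x; cases y
  simpa [toProd, Prod.ext_iff, Octonion.mk.injEq] using h

instance : AddCommGroup 𝕆 :=
  Function.Injective.addCommGroup toProd toProd_injective rfl (fun _ _ => rfl) (fun _ => rfl)
    (fun _ _ => rfl) (fun _ _ => rfl) (fun _ _ => rfl)

def toProdHom : 𝕆 →+ Quaternion ℝ × Quaternion ℝ :=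
  { toFun := toProd, map_zero' := rfl, map_add' := fun _ _ => rfl }

instance : Module ℝ 𝕆 :=
  Function.Injective.module ℝ toProdHom toProd_injective (fun _ _ => rfl)

def toProdLin : 𝕆 →ₗ[ℝ] Quaternion ℝ × Quaternion ℝ :=
  { toFun := toProd, map_add' := fun _ _ => rfl, map_smul' := fun _ _ => rfl }

instance : NormedAddCommGroup 𝕆 := NormedAddCommGroup.induced 𝕆 _ toProdHom toProd_injective
instance : NormedSpace ℝ 𝕆 := NormedSpace.induced ℝ 𝕆 _ toProdLin

/-- Octonionic conjugation. -/
def conj (x : 𝕆) : 𝕆 := ⟨star x.a, -x.b⟩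

/-- The real part of an octonion. -/
def re (x : 𝕆) : ℝ := x.a.re

/-- The imaginary part of an octonion. -/
def im (x : 𝕆) : 𝕆 := ⟨x.a.im, x.b⟩

/-- The squared (Euclidean) norm of an octonion. -/
def normSq (x : 𝕆) : ℝ := Quaternion.normSq x.a + Quaternion.normSq x.b

/-- The (Euclidean) norm of an octonion. -/
def onorm (x : 𝕆) : ℝ := Real.sqrt (normSq x)

instance : Inv 𝕆 := ⟨fun x => (normSq x)⁻¹ • conj x⟩

/-- The sphere of imaginary units of `𝕆`. -/
def sph : Set 𝕆 := {I | onorm I = 1 ∧ re I = 0}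

/-- `tau I (α + β i) = α + β I`. -/
def tau (I : 𝕆) (z : ℂ) : 𝕆 := z.re • (1 : 𝕆) + z.im • I

end Octonion

namespace Octonion

/-- `𝕊(Ω,a,b)`: the set of imaginary units `I` with `a + bI ∈ Ω`. -/
def sSet (Ω : Set 𝕆) (a b : ℝ) : Set 𝕆 := {I | I ∈ sph ∧ a • (1 : 𝕆) + b • I ∈ Ω}

/-- `Ω` is circularly connected if every `𝕊(Ω,a,b)` is connected. -/
def CircularlyConnected (Ω : Set 𝕆) : Prop :=
  ∀ a b : ℝ, 0 < b → IsPreconnected (sSet Ω a b)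

/-- `f` is a (left) slice function on `Ω`: for every connected component of each nonempty
`𝕊(Ω,a,b)` there is a pair `(u,v)` with `f (a + bI) = u + Iv` on that component. -/
def IsSliceFunction (Ω : Set 𝕆) (f : 𝕆 → 𝕆) : Prop :=
  ∀ (a b : ℝ), 0 < b → ∀ I ∈ sSet Ω a b, ∃ u v : 𝕆,
    ∀ J ∈ connectedComponentIn (sSet Ω a b) I, f (a • (1 : 𝕆) + b • J) = u + J * v

open Classical

/-- `(u,v)` is the stem vector of the slice function `f` at `x ∈ Ω`: for real `x` it is
`(f x, 0)`; otherwise, writing `x = a + bI` with `b = |Im x| > 0` and `I` an imaginary unit,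
it is the solution of `f (a + bJ) = u + Jv` on the connected component of `𝕊(Ω,a,b)`
containing `I`. -/
def IsStemVector (Ω : Set 𝕆) (f : 𝕆 → 𝕆) (x : 𝕆) (u v : 𝕆) : Prop :=
  if im x = 0 then u = f x ∧ v = 0
  else ∀ K ∈ connectedComponentIn (sSet Ω (re x) (onorm (im x))) ((onorm (im x))⁻¹ • im x),
    f (re x • (1 : 𝕆) + onorm (im x) • K) = u + K * v

end Octonion

namespace Octonion

@[simp] lemma a_add (x y : 𝕆) : (x + y).a = x.a + y.a := rfl
@[simp] lemma b_add (x y : 𝕆) : (x + y).b = x.b + y.b := rfl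
@[simp] lemma a_sub (x y : 𝕆) : (x - y).a = x.a - y.a := rfl
@[simp] lemma b_sub (x y : 𝕆) : (x - y).b = x.b - y.b := rfl
@[simp] lemma a_smul (r : ℝ) (x : 𝕆) : (r • x).a = r • x.a := rfl
@[simp] lemma b_smul (r : ℝ) (x : 𝕆) : (r • x).b = r • x.b := rfl
@[simp] lemma a_one : (1 : 𝕆).a = 1 := rfl
@[simp] lemma b_one : (1 : 𝕆).b = 0 := rfl
@[simp] lemma a_zero : (0 : 𝕆).a = 0 := rfl
@[simp] lemma b_zero : (0 : 𝕆).b = 0 := rfl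
lemma a_mul (x y : 𝕆) : (x * y).a = x.a * y.a - star y.b * x.b := rfl
lemma b_mul (x y : 𝕆) : (x * y).b = y.b * x.a + x.b * star y.a := rfl
@[simp] lemma a_im (x : 𝕆) : (im x).a = x.a.im := rfl
@[simp] lemma b_im (x : 𝕆) : (im x).b = x.b := rfl
lemma re_def (x : 𝕆) : re x = x.a.re := rfl

/-- The Euclidean bilinear form on `𝕆`. -/
def Bf (x y : 𝕆) : ℝ :=
  x.a.re * y.a.re + x.a.imI * y.a.imI + x.a.imJ * y.a.imJ + x.a.imK * y.a.imK +
  x.b.re * y.b.re + x.b.imI * y.b.imI + x.b.imJ * y.b.imJ + x.b.imK * y.b.imK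

lemma normSq_eq_Bf (x : 𝕆) : normSq x = Bf x x := by
  simp only [normSq, Bf, Quaternion.normSq_def']; ring

lemma Bf_comm (x y : 𝕆) : Bf x y = Bf y x := by simp only [Bf]; ring

lemma normSq_nonneg (x : 𝕆) : 0 ≤ normSq x := by
  simp only [normSq, Quaternion.normSq_def']; positivity

lemma normSq_eq_zero {x : 𝕆} (h : normSq x = 0) : x = 0 := by
  have hqa : Quaternion.normSq x.a = 0 := by
    have h1 := Quaternion.normSq_nonneg (a := x.a)
    have h2 := Quaternion.normSq_nonneg (a := x.b)
    unfold normSq at h; linarith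
  have hqb : Quaternion.normSq x.b = 0 := by
    have h1 := Quaternion.normSq_nonneg (a := x.a)
    have h2 := Quaternion.normSq_nonneg (a := x.b)
    unfold normSq at h; linarith
  have ha := Quaternion.normSq_eq_zero.mp hqa
  have hb := Quaternion.normSq_eq_zero.mp hqb
  cases x
  simp only at ha hb
  rw [ha, hb]
  rfl

lemma normSq_smul (r : ℝ) (x : 𝕆) : normSq (r • x) = r ^ 2 * normSq x := by
  simp only [normSq, Quaternion.normSq_def', a_smul, b_smul, Quaternion.re_smul,
    Quaternion.imI_smul, Quaternion.imJ_smul, Quaternion.imK_smul, smul_eq_mul]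
  ring

lemma normSq_smul_add (α β : ℝ) (x y : 𝕆) :
    normSq (α • x + β • y) = α ^ 2 * normSq x + 2 * α * β * Bf x y + β ^ 2 * normSq y := by
  simp only [normSq, Bf, Quaternion.normSq_def', a_add, b_add, a_smul, b_smul,
    Quaternion.re_add, Quaternion.imI_add, Quaternion.imJ_add, Quaternion.imK_add,
    Quaternion.re_smul, Quaternion.imI_smul, Quaternion.imJ_smul, Quaternion.imK_smul,
    smul_eq_mul]
  ring

lemma Bf_smul_right (r : ℝ) (x y : 𝕆) : Bf x (r • y) = r * Bf x y := by
  simp only [Bf, a_smul, b_smul, Quaternion.re_smul, Quaternion.imI_smul,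
    Quaternion.imJ_smul, Quaternion.imK_smul, smul_eq_mul]
  ring

lemma Bf_sub_right (x y z : 𝕆) : Bf x (y - z) = Bf x y - Bf x z := by
  simp only [Bf, a_sub, b_sub, Quaternion.re_sub, Quaternion.imI_sub,
    Quaternion.imJ_sub, Quaternion.imK_sub]
  ring

lemma onorm_smul (r : ℝ) (x : 𝕆) : onorm (r • x) = |r| * onorm x := by
  rw [onorm, onorm, normSq_smul, Real.sqrt_mul (sq_nonneg r), Real.sqrt_sq_eq_abs]

lemma normSq_eq_one_of_onorm {x : 𝕆} (h : onorm x = 1) : normSq x = 1 :=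
  Real.sqrt_eq_one.mp h

lemma re_add (x y : 𝕆) : re (x + y) = re x + re y := by
  simp [re_def]

lemma re_smul (r : ℝ) (x : 𝕆) : re (r • x) = r * re x := by
  simp [re_def, Quaternion.re_smul]

lemma smul_cancel {r : ℝ} {x : 𝕆} (hr : r ≠ 0) (h : r • x = 0) : x = 0 := by
  have := congrArg (fun y => r⁻¹ • y) h
  simpa [smul_smul, inv_mul_cancel₀ hr] using this

lemma smul_mul (r : ℝ) (x y : 𝕆) : (r • x) * y = r • (x * y) := by
  ext <;> simp [a_mul, b_mul, smul_mul_assoc, mul_smul_comm, smul_sub, smul_add]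

lemma add_mul' (x y w : 𝕆) : (x + y) * w = x * w + y * w := by
  ext <;> simp only [a_mul, b_mul, a_add, b_add, add_mul, mul_add] <;> abel

lemma mul_sub' (x y z : 𝕆) : x * (y - z) = x * y - x * z := by
  ext <;> simp only [a_mul, b_mul, a_sub, b_sub, mul_sub, sub_mul, star_sub] <;> abel

/-- The first standard imaginary unit. -/
def e1 : 𝕆 := ⟨⟨0, 1, 0, 0⟩, 0⟩
/-- The second standard imaginary unit. -/
def e2 : 𝕆 := ⟨⟨0, 0, 1, 0⟩, 0⟩

lemma normSq_e1 : normSq e1 = 1 := by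
  simp [normSq, Quaternion.normSq_def', Quaternion.normSq_def' (⟨0, 1, 0, 0⟩ : Quaternion ℝ), e1, Quaternion.re_zero, Quaternion.imI_zero, Quaternion.imJ_zero, Quaternion.imK_zero]

lemma normSq_e2 : normSq e2 = 1 := by
  simp [normSq, Quaternion.normSq_def', Quaternion.normSq_def' (⟨0, 0, 1, 0⟩ : Quaternion ℝ), e2, Quaternion.re_zero, Quaternion.imI_zero, Quaternion.imJ_zero, Quaternion.imK_zero]

lemma re_e1 : re e1 = 0 := rfl
lemma re_e2 : re e2 = 0 := rfl

lemma Bf_e1_e2 : Bf e1 e2 = 0 := by simp [Bf, e1, e2, Quaternion.re_zero, Quaternion.imI_zero, Quaternion.imJ_zero, Quaternion.imK_zero]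

lemma eq_zero_of_e1_mul {w : 𝕆} (h : e1 * w = 0) : w = 0 := by
  have ha : e1.a * w.a = 0 := by
    have := congrArg Octonion.a h
    simpa [a_mul, e1] using this
  have hb : w.b * e1.a = 0 := by
    have := congrArg Octonion.b h
    simpa [b_mul, e1] using this
  have he : (e1.a : Quaternion ℝ) ≠ 0 := by
    intro hc
    have := congrArg QuaternionAlgebra.imI hc
    simp [e1, Quaternion.re_zero, Quaternion.imI_zero, Quaternion.imJ_zero, Quaternion.imK_zero] at this
  ext
  · have := (mul_eq_zero.mp ha).resolve_left he
    simp [this]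
  · have := (mul_eq_zero.mp ha).resolve_left he
    simp [this]
  · have := (mul_eq_zero.mp ha).resolve_left he
    simp [this]
  · have := (mul_eq_zero.mp ha).resolve_left he
    simp [this]
  · have := (mul_eq_zero.mp hb).resolve_right he
    simp [this]
  · have := (mul_eq_zero.mp hb).resolve_right he
    simp [this]
  · have := (mul_eq_zero.mp hb).resolve_right he
    simp [this]
  · have := (mul_eq_zero.mp hb).resolve_right he
    simp [this]

lemma curve_lemma {Ω : Set 𝕆} (hΩo : IsOpen Ω) {a b : ℝ} {w c K₀ ξ : 𝕆}
    (hK₀ : K₀ ∈ sSet Ω a b) (hξre : re ξ = 0) (hξn : normSq ξ = 1) (hBξ : Bf K₀ ξ = 0)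
    (h : ∀ K ∈ sSet Ω a b, K * w = c) : ξ * w = 0 ∧ c = 0 := by
  obtain ⟨⟨hK₀n, hK₀re⟩, hK₀Ω⟩ := hK₀
  have hK₀nsq : normSq K₀ = 1 := normSq_eq_one_of_onorm hK₀n
  set F : ℝ → 𝕆 := fun t => a • (1 : 𝕆) + b • (Real.cos t • K₀ + Real.sin t • ξ) with hF
  have hFc : Continuous F := by
    apply Continuous.add continuous_const
    exact (((Real.continuous_cos.smul continuous_const).add
      (Real.continuous_sin.smul continuous_const)).const_smul b)
  have hF0 : F 0 ∈ Ω := by simpa [hF] using hK₀Ω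
  have hnh : F ⁻¹' Ω ∈ nhds (0 : ℝ) := hFc.continuousAt.preimage_mem_nhds (hΩo.mem_nhds hF0)
  obtain ⟨δ, hδ, hball⟩ := Metric.mem_nhds_iff.mp hnh
  set t : ℝ := min (δ / 2) 1 with ht
  have ht0 : 0 < t := lt_min (by linarith) one_pos
  have ht1 : t ≤ 1 := min_le_right _ _
  have htδ : |t| < δ := by
    rw [abs_of_pos ht0]
    exact lt_of_le_of_lt (min_le_left _ _) (by linarith)
  have hsin : 0 < Real.sin t :=
    Real.sin_pos_of_pos_of_lt_pi ht0 (lt_of_le_of_lt ht1 (by linarith [Real.pi_gt_three]))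
  have hcos : Real.cos t ≠ 1 := by
    intro hc
    have := Real.sin_sq_add_cos_sq t
    nlinarith
  have hmem : ∀ s : ℝ, |s| < δ → (Real.cos s • K₀ + Real.sin s • ξ) ∈ sSet Ω a b := by
    intro s hs
    refine ⟨⟨?_, ?_⟩, ?_⟩
    · rw [onorm, normSq_smul_add, hK₀nsq, hξn, hBξ]
      have : Real.cos s ^ 2 * 1 + 2 * Real.cos s * Real.sin s * 0 + Real.sin s ^ 2 * 1 = 1 := by
        have := Real.sin_sq_add_cos_sq s; linarith
      rw [this, Real.sqrt_one]
    · rw [re_add, re_smul, re_smul, hK₀re, hξre]; ring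
    · have : s ∈ F ⁻¹' Ω := hball (by simpa [Real.dist_eq] using hs)
      simpa [hF] using this
  have h0 : K₀ * w = c := h K₀ ⟨⟨hK₀n, hK₀re⟩, hK₀Ω⟩
  have h1 : Real.cos t • c + Real.sin t • (ξ * w) = c := by
    have := h _ (hmem t htδ)
    rw [add_mul', smul_mul, smul_mul, h0] at this
    exact this
  have h2 : Real.cos t • c - Real.sin t • (ξ * w) = c := by
    have := h _ (hmem (-t) (by rwa [abs_neg]))
    rw [add_mul', smul_mul, smul_mul, h0, Real.cos_neg, Real.sin_neg] at this
    rw [sub_eq_add_neg, ← neg_smul]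
    exact this
  have hξw : ξ * w = 0 := by
    have hsum : (2 * Real.sin t) • (ξ * w) = 0 := by
      have : (2 * Real.sin t) • (ξ * w) =
          (Real.cos t • c + Real.sin t • (ξ * w)) -
          (Real.cos t • c - Real.sin t • (ξ * w)) := by module
      rw [this, h1, h2, sub_self]
    exact smul_cancel (by positivity) hsum
  refine ⟨hξw, ?_⟩
  rw [hξw, smul_zero, add_zero] at h1
  have hfin : (1 - Real.cos t) • c = 0 := by
    have heq : (1 - Real.cos t) • c = c - Real.cos t • c := by module
    rw [heq, h1, sub_self]
  exact smul_cancel (sub_ne_zero.mpr fun hc => hcos hc.symm) hfin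

lemma key_lemma {Ω : Set 𝕆} (hΩo : IsOpen Ω) {a b : ℝ} {w c K₀ : 𝕆}
    (hK₀ : K₀ ∈ sSet Ω a b) (h : ∀ K ∈ sSet Ω a b, K * w = c) : w = 0 ∧ c = 0 := by
  have hK₀nsq : normSq K₀ = 1 := normSq_eq_one_of_onorm hK₀.1.1
  have hK₀re : re K₀ = 0 := hK₀.1.2
  set β : ℝ := Bf e1 K₀ with hβ
  set p : 𝕆 := e1 - β • K₀ with hp
  have hBKp : Bf K₀ p = 0 := by
    rw [hp, Bf_sub_right, Bf_smul_right, ← normSq_eq_Bf, hK₀nsq, Bf_comm, ← hβ]; ring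
  have hrep : re p = 0 := by
    rw [hp]
    have : re (e1 - β • K₀) = re e1 - β * re K₀ := by
      simp [re_def, Quaternion.re_sub, Quaternion.re_smul]
    rw [this, re_e1, hK₀re]; ring
  by_cases hp0 : p = 0
  · -- e1 = β • K₀, so K₀ = β • e1 with β ^ 2 = 1
    have he1K : e1 = β • K₀ := by
      have := sub_eq_zero.mp hp0; exact this
    have hβsq : β ^ 2 = 1 := by
      have := congrArg normSq he1K
      rw [normSq_e1, normSq_smul, hK₀nsq] at this
      linarith
    have hβne : β ≠ 0 := by intro hc; rw [hc] at hβsq; norm_num at hβsq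
    have hK₀e1 : K₀ = β • e1 := by
      rw [he1K, smul_smul]
      have : β * β = 1 := by nlinarith
      rw [this, one_smul]
    have hBe2 : Bf K₀ e2 = 0 := by
      rw [hK₀e1, Bf_comm, Bf_smul_right, Bf_comm, Bf_e1_e2]; ring
    obtain ⟨_, hc⟩ := curve_lemma hΩo hK₀ re_e2 normSq_e2 hBe2 h
    have hK₀w : K₀ * w = 0 := by rw [h K₀ hK₀, hc]
    have he1w : e1 * w = 0 := by rw [he1K, smul_mul, hK₀w, smul_zero]
    exact ⟨eq_zero_of_e1_mul he1w, hc⟩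
  · have hpn : 0 < normSq p := by
      rcases lt_or_eq_of_le (normSq_nonneg p) with h' | h'
      · exact h'
      · exact absurd (normSq_eq_zero h'.symm) hp0
    set s : ℝ := Real.sqrt (normSq p) with hs
    have hs0 : 0 < s := Real.sqrt_pos.mpr hpn
    set ξ : 𝕆 := s⁻¹ • p with hξ
    have hξn : normSq ξ = 1 := by
      rw [hξ, normSq_smul, inv_pow, hs, Real.sq_sqrt (le_of_lt hpn)]
      exact inv_mul_cancel₀ (ne_of_gt hpn)
    have hξre : re ξ = 0 := by rw [hξ, re_smul, hrep]; ring
    have hBξ : Bf K₀ ξ = 0 := by rw [hξ, Bf_smul_right, hBKp]; ring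
    obtain ⟨hξw, hc⟩ := curve_lemma hΩo hK₀ hξre hξn hBξ h
    have hK₀w : K₀ * w = 0 := by rw [h K₀ hK₀, hc]
    have he1w : e1 * w = 0 := by
      have hsp : s • ξ = p := by
        rw [hξ, smul_smul, mul_inv_cancel₀ (ne_of_gt hs0), one_smul]
      have he1 : e1 = β • K₀ + s • ξ := by rw [hsp, hp]; abel
      rw [he1, add_mul', smul_mul, smul_mul, hK₀w, hξw, smul_zero, smul_zero, add_zero]
    exact ⟨eq_zero_of_e1_mul he1w, hc⟩

lemma im_tau {I : 𝕆} (hI : re I = 0) (z : ℂ) : im (tau I z) = z.im • I := by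
  have hIa : I.a.re = 0 := hI
  ext
  · simp [tau, Quaternion.re_im, Quaternion.re_add, Quaternion.re_smul, hIa]
  · simp [tau, Quaternion.imI_im, Quaternion.imI_add, Quaternion.imI_smul, Quaternion.imI_one]
  · simp [tau, Quaternion.imJ_im, Quaternion.imJ_add, Quaternion.imJ_smul, Quaternion.imJ_one]
  · simp [tau, Quaternion.imK_im, Quaternion.imK_add, Quaternion.imK_smul, Quaternion.imK_one]
  · simp [tau]
  · simp [tau]
  · simp [tau]
  · simp [tau]

lemma re_tau {I : 𝕆} (hI : re I = 0) (z : ℂ) : re (tau I z) = z.re := by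
  have hIa : I.a.re = 0 := hI
  simp [tau, re_def, Quaternion.re_add, Quaternion.re_smul, hIa, Quaternion.re_one]

end Octonion

open Octonion in
/-- every slice function on a circularly connected domain is a complete slice
function: for any imaginary units `I₁, I₂` the corresponding slice stem functions agree on
`Ω^{I₁} ∩ Ω^{I₂}`, i.e. the stem vectors of `f` at `τ_{I₁} z` and `τ_{I₂} z` coincide. -/
theorem stmt13 (Ω : Set 𝕆) (hΩo : IsOpen Ω) (hΩc : IsConnected Ω)
    (hcc : CircularlyConnected Ω) (f : 𝕆 → 𝕆) (hf : IsSliceFunction Ω f)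
    (I₁ I₂ : 𝕆) (hI₁ : I₁ ∈ sph) (hI₂ : I₂ ∈ sph) (z : ℂ)
    (h₁ : tau I₁ z ∈ Ω) (h₂ : tau I₂ z ∈ Ω) (u₁ v₁ u₂ v₂ : 𝕆)
    (hs₁ : IsStemVector Ω f (tau I₁ z) u₁ v₁) (hs₂ : IsStemVector Ω f (tau I₂ z) u₂ v₂) :
    u₁ = u₂ ∧ v₁ = v₂ := by
  by_cases hz : z.im = 0
  · have h01 : im (tau I₁ z) = 0 := by rw [im_tau hI₁.2, hz, zero_smul]
    have h02 : im (tau I₂ z) = 0 := by rw [im_tau hI₂.2, hz, zero_smul]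
    have htau : tau I₁ z = tau I₂ z := by simp [tau, hz]
    rw [IsStemVector, if_pos h01] at hs₁
    rw [IsStemVector, if_pos h02] at hs₂
    exact ⟨by rw [hs₁.1, hs₂.1, htau], by rw [hs₁.2, hs₂.2]⟩
  · have hb : (0 : ℝ) < |z.im| := abs_pos.mpr hz
    set ε : ℝ := |z.im|⁻¹ * z.im with hε
    have habsε : |ε| = 1 := by
      rw [hε, abs_mul, abs_inv, abs_abs, inv_mul_cancel₀ (ne_of_gt hb)]
    have hbε : |z.im| * ε = z.im := by
      rw [hε, ← mul_assoc, mul_inv_cancel₀ (ne_of_gt hb), one_mul]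
    have hsph : ∀ I : 𝕆, I ∈ sph → ε • I ∈ sph := by
      intro I hI
      exact ⟨by rw [onorm_smul, habsε, hI.1, one_mul], by rw [re_smul, hI.2, mul_zero]⟩
    have hΩmem : ∀ I : 𝕆, tau I z ∈ Ω → z.re • (1 : 𝕆) + |z.im| • (ε • I) ∈ Ω := by
      intro I hI
      rw [smul_smul, hbε]
      exact hI
    have hK₁ : ε • I₁ ∈ sSet Ω z.re |z.im| := ⟨hsph I₁ hI₁, hΩmem I₁ h₁⟩
    have hK₂ : ε • I₂ ∈ sSet Ω z.re |z.im| := ⟨hsph I₂ hI₂, hΩmem I₂ h₂⟩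
    have hprecon : IsPreconnected (sSet Ω z.re |z.im|) := hcc z.re |z.im| hb
    have hconn₁ : connectedComponentIn (sSet Ω z.re |z.im|) (ε • I₁) = sSet Ω z.re |z.im| :=
      hprecon.connectedComponentIn hK₁
    have hconn₂ : connectedComponentIn (sSet Ω z.re |z.im|) (ε • I₂) = sSet Ω z.re |z.im| :=
      hprecon.connectedComponentIn hK₂
    have hIne : ∀ I : 𝕆, I ∈ sph → im (tau I z) ≠ 0 := by
      intro I hI hc
      rw [im_tau hI.2] at hc
      have : I = (0 : 𝕆) := smul_cancel hz hc
      have h1 : onorm I = 1 := hI.1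
      rw [this] at h1
      simp [onorm, normSq, Real.sqrt_eq_one] at h1
    have honormim : ∀ I : 𝕆, I ∈ sph → onorm (im (tau I z)) = |z.im| := by
      intro I hI
      rw [im_tau hI.2, onorm_smul, hI.1, mul_one]
    have hunit : ∀ I : 𝕆, I ∈ sph → |z.im|⁻¹ • im (tau I z) = ε • I := by
      intro I hI
      rw [im_tau hI.2, smul_smul, ← hε]
    rw [IsStemVector, if_neg (hIne I₁ hI₁)] at hs₁
    rw [honormim I₁ hI₁, hunit I₁ hI₁, re_tau hI₁.2, hconn₁] at hs₁
    rw [IsStemVector, if_neg (hIne I₂ hI₂)] at hs₂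
    rw [honormim I₂ hI₂, hunit I₂ hI₂, re_tau hI₂.2, hconn₂] at hs₂
    have hkey : ∀ K ∈ sSet Ω z.re |z.im|, K * (v₁ - v₂) = u₂ - u₁ := by
      intro K hK
      have e₁ := hs₁ K hK
      have e₂ := hs₂ K hK
      have h : u₁ + K * v₁ = u₂ + K * v₂ := e₁.symm.trans e₂
      rw [mul_sub']
      calc K * v₁ - K * v₂ = (u₁ + K * v₁) - (u₂ + K * v₂) + (u₂ - u₁) := by abel
        _ = u₂ - u₁ := by rw [h, sub_self, zero_add]
    obtain ⟨hw, hc⟩ := key_lemma hΩo hK₁ hkey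
    exact ⟨(sub_eq_zero.mp hc).symm, sub_eq_zero.mp hw⟩
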